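/- Let ξ be an embedding of (F, O) into an acyclic hypergraph H_a with witness join tree JT rooted at ξ(root of tree(F,O)). Then for any two distinct vertices v, v' in the image of ξ, v is a descendant of v' in JT if and only if ξ⁻¹(v) is a descendant of ξ⁻¹(v') in the output-aware parse tree tree(F, O). -/
import Mathlib

open SimpleGraph Walk

section Aux

variable {V : Type} {G : SimpleGraph V}

/-- A walk avoiding `x` gives reachability in the induced graph on `{v | v ≠ x}`. -/
lemma walk_induce_reachable {x : V} :
    ∀ {a b : V} (w : G.Walk a b), (∀ v ∈ w.support, v ≠ x) →
      ∀ (ha : a ≠ x) (hb : b ≠ x),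
        (G.induce {v | v ≠ x}).Reachable ⟨a, ha⟩ ⟨b, hb⟩ := by
  intro a b w
  induction w with
  | nil => intro _ ha hb; rfl
  | @cons a c b h w ih =>
    intro hs ha hb
    have hc : c ≠ x := hs c (by simp [Walk.support_cons])
    have hadj : (G.induce {v | v ≠ x}).Adj ⟨a, ha⟩ ⟨c, hc⟩ := by
      simpa [SimpleGraph.comap_adj] using h
    exact hadj.reachable.trans (ih (fun v hv => hs v (by simp [Walk.support_cons, hv])) hc hb)

/-- Key "antisymmetry" lemma. -/
lemma L4 [DecidableEq V] {x z y m : V} (P : G.Walk x z) (hP : P.IsPath)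
    (hy : y ∈ P.support)
    (h2 : ∀ w : G.Walk y x, m ∈ w.support)
    (h3 : ∀ w : G.Walk y z, m ∈ w.support) : m = y := by
  set A := P.takeUntil y hy with hA
  set B := P.dropUntil y hy with hB
  have hmA : m ∈ A.support := by
    have := h2 A.reverse
    rwa [Walk.support_reverse, List.mem_reverse] at this
  have hmB : m ∈ B.support := h3 B
  have hsupp : P.support = A.support ++ B.support.tail := by
    conv_lhs => rw [← P.take_spec hy]
    rw [Walk.support_append]
  have hnd : P.support.Nodup := hP.support_nodup
  rw [hsupp] at hnd
  have hdisj := List.disjoint_of_nodup_append hnd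
  rw [B.support_eq_cons] at hmB
  rcases List.mem_cons.mp hmB with h | h
  · exact h
  · exact absurd h (hdisj hmA)

/-- Along a path `T` ending in `S`, there is a first vertex `m` of `T` lying in `S`. -/
lemma exists_first {S : Set V} [DecidablePred (· ∈ S)] :
    ∀ {a b : V} (T : G.Walk a b), T.IsPath → b ∈ S →
      ∃ m, m ∈ S ∧ m ∈ T.support ∧
        ∃ W : G.Walk a m, W.IsPath ∧ W.support ⊆ T.support ∧
          ∀ v ∈ W.support, v ∈ S → v = m := by
  intro a b T
  induction T with
  | nil =>
    intro _ hb
    refine ⟨_, hb, by simp, Walk.nil, by simp, by simp, ?_⟩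
    intro v hv _
    simpa using hv
  | @cons a c b h T' ih =>
    intro hT hb
    by_cases haS : a ∈ S
    · refine ⟨a, haS, by simp, Walk.nil, by simp, ?_, ?_⟩
      · intro v hv
        simp only [Walk.support_nil, List.mem_singleton] at hv
        subst hv; exact Walk.start_mem_support _
      · intro v hv _
        simpa using hv
    · obtain ⟨m, hmS, hmT, W', hW'p, hW'sub, hmin⟩ := ih hT.of_cons hb
      have haW : a ∉ W'.support := fun hx => ((Walk.cons_isPath_iff h T').mp hT).2 (hW'sub hx)
      refine ⟨m, hmS, by simp [Walk.support_cons, hmT], Walk.cons h W', ?_, ?_, ?_⟩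
      · exact (Walk.cons_isPath_iff h W').mpr ⟨hW'p, haW⟩
      · intro v hv
        rcases List.mem_cons.mp (by simpa [Walk.support_cons] using hv) with h1 | h1
        · subst h1; exact Walk.start_mem_support _
        · simp [Walk.support_cons, hW'sub h1]
      · intro v hv hvS
        rcases List.mem_cons.mp (by simpa [Walk.support_cons] using hv) with h1 | h1
        · exact absurd (h1 ▸ hvS) haS
        · exact hmin v h1 hvS

end Aux

/-- In a tree `G` rooted at `r`, `x` is a descendant of `y` iff `y` lies on every
path from `r` to `x` (in a tree, on *the* unique such path). A vertex is regarded as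
a descendant of itself. -/
def Desc {V : Type} (G : SimpleGraph V) (r x y : V) : Prop :=
  ∀ p : G.Path r x, y ∈ p.val.support

/-- An embedding `ξ` of the output-aware parse tree `tree(F,O)`
(a rooted tree `PT` with root `rp`, vertices labeled with variable sets by `τ`) into a
join tree `JT` (with labels `χ`) — i.e., an injective map satisfying the
label-covering condition (1) and the separation condition (2) — preserves the
descendant relation, where `JT` is rooted at `ξ rp`: for distinct parse-tree vertices
`p, p'`, `ξ p` is a descendant of `ξ p'` in `JT` iff `p` is a descendant of `p'` in
the parse tree. -/
theorem stmt6 {VP VJ α : Type} [Fintype VP] [Fintype VJ]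
    (PT : SimpleGraph VP) (hPT : PT.IsTree) (rp : VP)
    (JT : SimpleGraph VJ) (hJT : JT.IsTree)
    (χ : VJ → Finset α) (τ : VP → Finset α)
    (ξ : VP → VJ) (hinj : Function.Injective ξ)
    (hcond1 : ∀ p, τ p ⊆ χ (ξ p))
    (hcond2 : ∀ p q q', PT.Adj p q → PT.Adj p q' → q ≠ q' →
      ∀ (hq : ξ q ≠ ξ p) (hq' : ξ q' ≠ ξ p),
        ¬ (JT.induce {v | v ≠ ξ p}).Reachable ⟨ξ q, hq⟩ ⟨ξ q', hq'⟩)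
    (p p' : VP) (hne : p ≠ p') :
    Desc JT (ξ rp) (ξ p) (ξ p') ↔ Desc PT rp p p' := by
  classical
  -- Separation: for distinct neighbours q, q' of a vertex c, every JT-walk from
  -- ξ q to ξ q' passes through ξ c.
  have hsep : ∀ (c q q' : VP), PT.Adj c q → PT.Adj c q' → q ≠ q' →
      ∀ w : JT.Walk (ξ q) (ξ q'), ξ c ∈ w.support := by
    intro c q q' hq hq' hqq' w
    by_contra hcp
    have hq1 : ξ q ≠ ξ c := fun e => hq.ne' (hinj e)
    have hq2 : ξ q' ≠ ξ c := fun e => hq'.ne' (hinj e)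
    exact hcond2 c q q' hq hq' hqq' hq1 hq2
      (walk_induce_reachable w (fun v hv e => hcp (by rwa [e] at hv)) hq1 hq2)
  -- Claim A
  have claimA : ∀ {a b : VP} (w : PT.Walk a b), w.IsPath →
      ∀ u ∈ w.support, ∀ W2 : JT.Walk (ξ a) (ξ b), ξ u ∈ W2.support := by
    intro a b w
    induction w with
    | nil =>
      intro _ u hu W2
      simp only [Walk.support_nil, List.mem_singleton] at hu
      subst hu; exact W2.start_mem_support
    | @cons a c b h w' ih =>
      intro hp u hu W2
      have hkey : ∀ W2 : JT.Walk (ξ a) (ξ b), ξ c ∈ W2.support := by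
        cases w' with
        | nil => exact fun W2 => W2.end_mem_support
        | @cons c d b h2 w'' =>
          intro W2
          obtain ⟨w0⟩ := hJT.isConnected.preconnected (ξ d) (ξ b)
          set P := w0.toPath with hPdef
          have hdmem : d ∈ (Walk.cons h2 w'').support := by
            rw [Walk.support_cons]
            exact List.mem_cons_of_mem _ w''.start_mem_support
          have hane : a ≠ d := fun e =>
            ((Walk.cons_isPath_iff h (Walk.cons h2 w'')).mp hp).2 (e ▸ hdmem)
          have hmem := hsep c a d h.symm h2 hane (W2.append P.val.reverse)
          rw [Walk.support_append, List.mem_append] at hmem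
          rcases hmem with h1 | h1
          · exact h1
          · have hcP : ξ c ∈ P.val.support := by
              have := List.mem_of_mem_tail h1
              rwa [Walk.support_reverse, List.mem_reverse] at this
            have h2' : ∀ w : JT.Walk (ξ c) (ξ d), ξ d ∈ w.support :=
              fun w => w.end_mem_support
            have h3' : ∀ w : JT.Walk (ξ c) (ξ b), ξ d ∈ w.support :=
              fun w => ih hp.of_cons d (by simp [Walk.support_cons]) w
            have := L4 P.val P.2 hcP h2' h3'
            exact absurd (hinj this) h2.ne'
      rcases List.mem_cons.mp (by simpa [Walk.support_cons] using hu) with h1 | h1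
      · subst h1; exact W2.start_mem_support
      · have hc := hkey W2
        have := ih hp.of_cons u h1 (W2.dropUntil (ξ c) hc)
        exact Walk.support_dropUntil_subset _ _ this
  constructor
  · -- JT descendant → PT descendant
    intro hD
    by_contra hnd
    unfold Desc at hnd
    push_neg at hnd
    obtain ⟨P0, hP0⟩ := hnd
    obtain ⟨t0⟩ := hPT.isConnected.preconnected p' rp
    set T := t0.toPath with hTdef
    have hrpS : rp ∈ {v | v ∈ P0.val.support} := P0.val.start_mem_support
    obtain ⟨m, hmS, hmT, W, hWp, hWsub, hmin⟩ := exists_first T.val T.2 hrpS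
    have hmS' : m ∈ P0.val.support := hmS
    set B := P0.val.dropUntil m hmS' with hBdef
    have hBp : B.IsPath := P0.2.dropUntil hmS'
    have hUp : (W.append B).IsPath := by
      rw [Walk.isPath_def, Walk.support_append]
      refine List.Nodup.append hWp.support_nodup ?_ ?_
      · exact (List.nodup_cons.mp (B.support_eq_cons ▸ hBp.support_nodup)).2
      · intro v hvW hvB
        have hvS : v ∈ P0.val.support :=
          Walk.support_dropUntil_subset _ _ (List.mem_of_mem_tail hvB)
        have := hmin v hvW hvS
        subst this
        exact (List.nodup_cons.mp (B.support_eq_cons ▸ hBp.support_nodup)).1 hvB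
    have H3 : ∀ w : JT.Walk (ξ p') (ξ p), ξ m ∈ w.support := by
      intro w
      exact claimA (W.append B) hUp m
        (by rw [Walk.support_append, List.mem_append]; exact Or.inl W.end_mem_support) w
    have H2 : ∀ w : JT.Walk (ξ p') (ξ rp), ξ m ∈ w.support :=
      fun w => claimA T.val T.2 m hmT w
    obtain ⟨wj⟩ := hJT.isConnected.preconnected (ξ rp) (ξ p)
    set PJ := wj.toPath with hPJdef
    have hy : ξ p' ∈ PJ.val.support := hD PJ
    have := L4 PJ.val PJ.2 hy H2 H3
    have hmp' : m = p' := hinj this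
    exact hP0 (hmp' ▸ hmS')
  · -- PT descendant → JT descendant
    intro hD Pj
    obtain ⟨w0⟩ := hPT.isConnected.preconnected rp p
    set P1 := w0.toPath with hPdef
    exact claimA P1.val P1.2 p' (hD P1) Pj.val
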